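/- Let E be a real inner product space and let g1, g2 ∈ E with g2 ≠ 0 and ⟪g1,g2⟫ ≤ 0. Then the pair (α1*, α2*) = (0, -⟪g1,g2⟫/‖g2‖²) maximizes the dual objective (α1, α2) ↦ -½·‖g1 + α1·g1 + α2·g2‖² over all α1 ≥ 0, α2 ≥ 0; that is, α1* ≥ 0, α2* ≥ 0, and for all α1 ≥ 0, α2 ≥ 0 one has ‖g1 + α1*·g1 + α2*·g2‖ ≤ ‖g1 + α1·g1 + α2·g2‖. -/

import Mathlib

open scoped RealInnerProductSpace

/-- Solution of the Lagrange dual problem in the proof of Lemma 1 of GH: for `g2 ≠ 0`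
and `⟪g1,g2⟫ ≤ 0`, the pair `(α1*, α2*) = (0, -⟪g1,g2⟫/‖g2‖²)` maximizes the dual
objective `(α1, α2) ↦ -½‖g1 + α1 • g1 + α2 • g2‖²` over `α1 ≥ 0, α2 ≥ 0`. -/
theorem gh_dual_solution {E : Type*} [NormedAddCommGroup E] [InnerProductSpace ℝ E]
    (g1 g2 : E) (hg2 : g2 ≠ 0) (h : ⟪g1, g2⟫ ≤ 0) :
    (0 : ℝ) ≤ 0 ∧ (0 : ℝ) ≤ -⟪g1, g2⟫ / ‖g2‖ ^ 2 ∧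
      ∀ α1 α2 : ℝ, 0 ≤ α1 → 0 ≤ α2 →
        ‖g1 + (0 : ℝ) • g1 + (-⟪g1, g2⟫ / ‖g2‖ ^ 2) • g2‖ ≤ ‖g1 + α1 • g1 + α2 • g2‖ := by
  have hb : (0:ℝ) < ‖g2‖ ^ 2 := pow_pos (norm_pos_iff.2 hg2) 2
  refine ⟨le_refl 0, div_nonneg (by linarith) hb.le, ?_⟩
  intro α1 α2 h1 h2
  have key : ∀ s t : ℝ, ‖g1 + s • g1 + t • g2‖ ^ 2 =
      (1 + s) ^ 2 * ‖g1‖ ^ 2 + 2 * ((1 + s) * t * ⟪g1, g2⟫) + t ^ 2 * ‖g2‖ ^ 2 := by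
    intro s t
    have hrw : g1 + s • g1 + t • g2 = (1 + s) • g1 + t • g2 := by module
    rw [hrw, @norm_add_sq_real, norm_smul, real_inner_smul_left, real_inner_smul_right,
      norm_smul, mul_pow, mul_pow]
    simp only [Real.norm_eq_abs, sq_abs]
    ring
  have cs : ⟪g1, g2⟫ * ⟪g1, g2⟫ ≤ ‖g1‖ ^ 2 * ‖g2‖ ^ 2 := by
    have := real_inner_mul_inner_self_le g1 g2
    rwa [real_inner_self_eq_norm_sq, real_inner_self_eq_norm_sq] at this
  rw [← pow_le_pow_iff_left₀ (norm_nonneg _) (norm_nonneg _) (two_ne_zero), key, key]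
  set β : ℝ := -⟪g1, g2⟫ / ‖g2‖ ^ 2 with hβdef
  have hβ : β * ‖g2‖ ^ 2 = -⟪g1, g2⟫ := by
    rw [hβdef, div_mul_cancel₀ _ hb.ne']
  have hβ0 : 0 ≤ β := div_nonneg (by linarith) hb.le
  set a := ‖g1‖ ^ 2
  set b := ‖g2‖ ^ 2
  set c := ⟪g1, g2⟫
  have hab : 0 ≤ a + β * c := by nlinarith [cs, hβ, hb]
  have hcb : c + β * b = 0 := by linarith
  have h0 : (α2 - β) * b * (c + β * b) = 0 := by rw [hcb]; ring
  nlinarith [mul_nonneg (mul_nonneg h1 hab) hb.le, sq_nonneg (α1 * c + (α2 - β) * b),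
    mul_nonneg (sq_nonneg α1) (sub_nonneg.2 cs), h0, hb]
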